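/- Spectral norm constraint from invariance of the ball: Let ρ ∈ R^d and M ∈ R^{d×d}. Suppose that for every w ∈ B_W (the Euclidean radius-W ball in R^d), ρ + Mᵀw ∈ B_W. Then ||M||₂ ≤ sqrt(1 − ||ρ||²₂/W²). Moreover, taking w and −w shows ||M||₂ ≤ 1 directly. -/

import Mathlib

theorem spectral_norm_from_ball_invariance
    (d : ℕ) (W : ℝ) (hW : 0 < W)
    (ρ : EuclideanSpace ℝ (Fin d))
    (A : EuclideanSpace ℝ (Fin d) →L[ℝ] EuclideanSpace ℝ (Fin d))
    (hinv : ∀ w : EuclideanSpace ℝ (Fin d), ‖w‖ ≤ W → ‖ρ + A w‖ ≤ W) :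
    ‖A‖ ≤ Real.sqrt (1 - ‖ρ‖ ^ 2 / W ^ 2) ∧ ‖A‖ ≤ 1 := by
  -- key: parallelogram law with w and -w
  have key : ∀ w : EuclideanSpace ℝ (Fin d), ‖w‖ ≤ W → ‖A w‖ ^ 2 ≤ W ^ 2 - ‖ρ‖ ^ 2 := by
    intro w hw
    have h1 := hinv w hw
    have h2 := hinv (-w) (by rwa [norm_neg])
    rw [map_neg] at h2
    have e1 : ‖ρ + A w‖ ^ 2 = ‖ρ‖ ^ 2 + 2 * (inner ℝ ρ (A w) : ℝ) + ‖A w‖ ^ 2 :=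
      norm_add_sq_real ρ (A w)
    have e2 : ‖ρ + -A w‖ ^ 2 = ‖ρ‖ ^ 2 - 2 * (inner ℝ ρ (A w) : ℝ) + ‖A w‖ ^ 2 := by
      have := norm_sub_sq_real ρ (A w)
      simpa [sub_eq_add_neg] using this
    have hb1 : ‖ρ + A w‖ ^ 2 ≤ W ^ 2 := by
      have := norm_nonneg (ρ + A w)
      nlinarith
    have hb2 : ‖ρ + -A w‖ ^ 2 ≤ W ^ 2 := by
      have := norm_nonneg (ρ + -A w)
      nlinarith
    nlinarith
  have hρ : ‖ρ‖ ≤ W := by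
    have := hinv 0 (by simp [hW.le])
    simpa using this
  have hsub : (0:ℝ) ≤ W ^ 2 - ‖ρ‖ ^ 2 := by nlinarith [norm_nonneg ρ]
  have hone : (0:ℝ) ≤ 1 - ‖ρ‖ ^ 2 / W ^ 2 := by
    have hW2 : (0:ℝ) < W ^ 2 := by positivity
    rw [sub_nonneg, div_le_one hW2]; nlinarith [norm_nonneg ρ]
  have hc : Real.sqrt (1 - ‖ρ‖ ^ 2 / W ^ 2) = Real.sqrt (W ^ 2 - ‖ρ‖ ^ 2) / W := by
    have h' : Real.sqrt (1 - ‖ρ‖ ^ 2 / W ^ 2) * W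
        = Real.sqrt ((1 - ‖ρ‖ ^ 2 / W ^ 2) * W ^ 2) := by
      rw [Real.sqrt_mul hone, Real.sqrt_sq hW.le]
    rw [eq_div_iff hW.ne', h']
    congr 1
    field_simp
  have hmain : ‖A‖ ≤ Real.sqrt (1 - ‖ρ‖ ^ 2 / W ^ 2) := by
    apply ContinuousLinearMap.opNorm_le_bound _ (Real.sqrt_nonneg _)
    intro x
    rcases eq_or_ne x 0 with rfl | hx
    · simp
    · have hxn : (0:ℝ) < ‖x‖ := norm_pos_iff.mpr hx
      set w : EuclideanSpace ℝ (Fin d) := (W / ‖x‖) • x with hwdef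
      have hwnorm : ‖w‖ = W := by
        rw [hwdef, norm_smul, Real.norm_eq_abs, abs_of_pos (by positivity)]
        field_simp
      have hk := key w (le_of_eq hwnorm)
      have hAw : ‖A w‖ = (W / ‖x‖) * ‖A x‖ := by
        rw [hwdef, map_smul, norm_smul, Real.norm_eq_abs, abs_of_pos (by positivity)]
      have hAwle : ‖A w‖ ≤ Real.sqrt (W ^ 2 - ‖ρ‖ ^ 2) := by
        have := Real.sqrt_le_sqrt hk
        rwa [Real.sqrt_sq (norm_nonneg _)] at this
      rw [hAw, div_mul_eq_mul_div, div_le_iff₀ hxn] at hAwle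
      rw [hc, div_mul_eq_mul_div, le_div_iff₀ hW]
      nlinarith
  refine ⟨hmain, hmain.trans ?_⟩
  calc Real.sqrt (1 - ‖ρ‖ ^ 2 / W ^ 2) ≤ Real.sqrt 1 := by
        apply Real.sqrt_le_sqrt
        have : (0:ℝ) ≤ ‖ρ‖ ^ 2 / W ^ 2 := by positivity
        linarith
    _ = 1 := Real.sqrt_one
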